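/- Let n ≥ 1, α = π/(2n+1), and let k be an integer with 1 ≤ k ≤ n and gcd(k, 2n+1) = 1. Then the real numbers sin(kα)/sin(α) and sin(kα)/sin(nα) are units in the ring of algebraic integers: each of these numbers and its multiplicative inverse sin(α)/sin(kα), respectively sin(nα)/sin(kα), is an algebraic integer. -/

import Mathlib

open Real

open Complex Finset in
/-- Core identity: `sin(uα) = sin(vα) · e^((4n+1)u+v) · ∑_{j<c} (e^{2v})^j`
where `e = exp(iπ/(2n+1))`, provided `v·c ≡ u (mod 2n+1)`. -/
lemma sine_ratio_core (n u v c : ℕ) (hvc : v * c ≡ u [MOD 2 * n + 1]) :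
    ((Real.sin ((u : ℝ) * (π / (2 * (n : ℝ) + 1))) : ℂ)) =
      (Real.sin ((v : ℝ) * (π / (2 * (n : ℝ) + 1))) : ℂ) *
        (Complex.exp ((π / (2 * (n : ℝ) + 1) : ℝ) * Complex.I) ^ ((4 * n + 1) * u + v) *
          ∑ j ∈ Finset.range c,
            (Complex.exp ((π / (2 * (n : ℝ) + 1) : ℝ) * Complex.I) ^ (2 * v)) ^ j) := by
  set α : ℝ := π / (2 * (n : ℝ) + 1) with hα
  set e : ℂ := Complex.exp ((α : ℂ) * Complex.I) with he_def
  have hne : (2 * (n : ℝ) + 1) ≠ 0 := by positivity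
  have hneC : (2 * (n : ℂ) + 1) ≠ 0 := by exact_mod_cast hne
  have he : e ^ (4 * n + 2) = 1 := by
    rw [he_def, ← Complex.exp_nat_mul]
    rw [show ((4 * n + 2 : ℕ) : ℂ) * ((α : ℂ) * Complex.I) = 2 * (π : ℂ) * Complex.I by
      rw [hα]; push_cast; rw [div_mul_eq_mul_div, mul_div_assoc', div_eq_iff hneC]; ring]
    exact Complex.exp_two_pi_mul_I
  have hE0 : e ≠ 0 := Complex.exp_ne_zero _
  have h2 : e ^ (4 * n + 1) * e = 1 := by
    rw [← pow_succ, show 4 * n + 1 + 1 = 4 * n + 2 by omega]; exact he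
  have hinv' : e⁻¹ = e ^ (4 * n + 1) := (eq_inv_of_mul_eq_one_left h2).symm
  have hmod : ∀ a b : ℕ, a % (4 * n + 2) = b % (4 * n + 2) → e ^ a = e ^ b := by
    intro a b h
    conv_lhs => rw [← Nat.mod_add_div a (4 * n + 2)]
    conv_rhs => rw [← Nat.mod_add_div b (4 * n + 2)]
    rw [pow_add, pow_add, pow_mul, pow_mul, he, h]; simp
  have r1 : e ^ ((4 * n + 1) * v) * e ^ (2 * v) = e ^ v := by
    rw [← pow_add]
    exact hmod _ _ (by
      rw [show (4 * n + 1) * v + 2 * v = v + (4 * n + 2) * v by ring,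
        Nat.add_mul_mod_self_left])
  have r2 : e ^ ((4 * n + 1) * u + v) * e ^ ((4 * n + 1) * v) = e ^ ((4 * n + 1) * u) := by
    rw [← pow_add]
    exact hmod _ _ (by
      rw [show (4 * n + 1) * u + v + (4 * n + 1) * v = (4 * n + 1) * u + (4 * n + 2) * v by ring,
        Nat.add_mul_mod_self_left])
  have h2vc : 2 * v * c ≡ 2 * u [MOD 4 * n + 2] := by
    have h' := Nat.ModEq.mul_left' (c := 2) hvc
    rw [show 2 * (2 * n + 1) = 4 * n + 2 by ring, ← mul_assoc] at h'
    exact h'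
  have r3 : e ^ ((4 * n + 1) * u) * (e ^ (2 * v)) ^ c = e ^ u := by
    rw [← pow_mul, ← pow_add]
    refine hmod _ _ ?_
    have step1 : (4 * n + 1) * u + 2 * v * c ≡ (4 * n + 1) * u + 2 * u [MOD 4 * n + 2] :=
      Nat.ModEq.add_left _ h2vc
    have step2 : (4 * n + 1) * u + 2 * u ≡ u [MOD 4 * n + 2] := by
      show ((4 * n + 1) * u + 2 * u) % (4 * n + 2) = u % (4 * n + 2)
      rw [show (4 * n + 1) * u + 2 * u = u + (4 * n + 2) * u by ring,
        Nat.add_mul_mod_self_left]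
    exact step1.trans step2
  have hS : (∑ j ∈ Finset.range c, (e ^ (2 * v)) ^ j) * (e ^ (2 * v) - 1)
      = (e ^ (2 * v)) ^ c - 1 := geom_sum_mul _ _
  have hs : ∀ z : ℂ, Complex.sin z
      = (Complex.exp (-z * Complex.I) - Complex.exp (z * Complex.I)) * Complex.I / 2 :=
    fun z => rfl
  have hzpos : ∀ m : ℕ, Complex.exp ((((m : ℝ) * α : ℝ) : ℂ) * Complex.I) = e ^ m := by
    intro m
    rw [show (((m : ℝ) * α : ℝ) : ℂ) * Complex.I = (m : ℂ) * ((α : ℂ) * Complex.I) by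
      push_cast; ring, Complex.exp_nat_mul, he_def]
  have hzneg : ∀ m : ℕ,
      Complex.exp (-(((m : ℝ) * α : ℝ) : ℂ) * Complex.I) = e ^ ((4 * n + 1) * m) := by
    intro m
    rw [neg_mul, Complex.exp_neg, hzpos m, ← inv_pow, hinv', ← pow_mul]
  rw [Complex.ofReal_sin, Complex.ofReal_sin, hs, hs, hzpos, hzpos, hzneg, hzneg]
  linear_combination (Complex.I / 2) *
    (e ^ ((4 * n + 1) * v) * e ^ ((4 * n + 1) * u + v) * hS
      + ((e ^ (2 * v)) ^ c - 1) * r2 + r3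
      - e ^ ((4 * n + 1) * u + v) * (∑ j ∈ Finset.range c, (e ^ (2 * v)) ^ j) * r1)

/-- Integrality of the ratio `sin(uα)/sin(vα)` when `v·c ≡ u (mod 2n+1)`. -/
lemma sine_ratio_integral (n u v c : ℕ) (hvc : v * c ≡ u [MOD 2 * n + 1])
    (hv : Real.sin ((v : ℝ) * (π / (2 * (n : ℝ) + 1))) ≠ 0) :
    IsIntegral ℤ (Real.sin ((u : ℝ) * (π / (2 * (n : ℝ) + 1))) /
      Real.sin ((v : ℝ) * (π / (2 * (n : ℝ) + 1)))) := by
  set α : ℝ := π / (2 * (n : ℝ) + 1) with hα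
  set e : ℂ := Complex.exp ((α : ℂ) * Complex.I) with he_def
  have he : e ^ (4 * n + 2) = 1 := by
    rw [he_def, ← Complex.exp_nat_mul]
    rw [show ((4 * n + 2 : ℕ) : ℂ) * ((α : ℂ) * Complex.I) = 2 * (π : ℂ) * Complex.I by
      rw [hα]; push_cast
      have hne : (2 * (n : ℝ) + 1) ≠ 0 := by positivity
      have : (2 * (n : ℂ) + 1) ≠ 0 := by exact_mod_cast hne
      rw [div_mul_eq_mul_div, mul_div_assoc', div_eq_iff this]; ring]
    exact Complex.exp_two_pi_mul_I
  have heInt : IsIntegral ℤ e :=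
    ⟨Polynomial.X ^ (4 * n + 2) - Polynomial.C 1,
      Polynomial.monic_X_pow_sub_C 1 (by omega), by simp [he]⟩
  rw [← isIntegral_algHom_iff Complex.ofRealHom.toIntAlgHom Complex.ofReal_injective]
  have hcast : ((Real.sin ((u : ℝ) * α) / Real.sin ((v : ℝ) * α) : ℝ) : ℂ)
      = (Real.sin ((u : ℝ) * α) : ℂ) / (Real.sin ((v : ℝ) * α) : ℂ) := by push_cast; ring
  show IsIntegral ℤ ((Real.sin ((u : ℝ) * α) / Real.sin ((v : ℝ) * α) : ℝ) : ℂ)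
  rw [hcast, sine_ratio_core n u v c hvc,
    mul_div_cancel_left₀ _ (Complex.ofReal_ne_zero.mpr hv)]
  exact (heInt.pow _).mul (IsIntegral.sum _ (fun j _ => (heInt.pow (2 * v)).pow j))

theorem sine_ratios_are_units
    (n : ℕ) (hn : 1 ≤ n) (k : ℕ) (hk1 : 1 ≤ k) (hkn : k ≤ n)
    (hcop : Nat.gcd k (2 * n + 1) = 1) :
    IsIntegral ℤ (Real.sin (k * (π / (2 * n + 1))) / Real.sin (π / (2 * n + 1))) ∧
    IsIntegral ℤ (Real.sin (π / (2 * n + 1)) / Real.sin (k * (π / (2 * n + 1)))) ∧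
    IsIntegral ℤ (Real.sin (k * (π / (2 * n + 1))) / Real.sin (n * (π / (2 * n + 1)))) ∧
    IsIntegral ℤ (Real.sin (n * (π / (2 * n + 1))) / Real.sin (k * (π / (2 * n + 1)))) := by
  have hπ := Real.pi_pos
  have hne : (0:ℝ) < 2 * (n:ℝ) + 1 := by positivity
  have hsin : ∀ j : ℕ, 1 ≤ j → j ≤ n →
      Real.sin ((j:ℝ) * (π / (2 * (n:ℝ) + 1))) ≠ 0 := by
    intro j hj1 hjn
    apply ne_of_gt
    apply Real.sin_pos_of_pos_of_lt_pi
    · have h1 : (1:ℝ) ≤ (j:ℝ) := by exact_mod_cast hj1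
      have : 0 < π / (2 * (n:ℝ) + 1) := by positivity
      nlinarith
    · have hj : (j:ℝ) ≤ (n:ℝ) := by exact_mod_cast hjn
      rw [mul_div_assoc', div_lt_iff₀ hne]
      nlinarith
  have hN1 : 1 < 2 * n + 1 := by omega
  have hck : Nat.Coprime k (2 * n + 1) := hcop
  obtain ⟨m, -, hm⟩ := Nat.exists_mul_mod_eq_one_of_coprime hck hN1
  have hkm : k * m ≡ 1 [MOD 2 * n + 1] := by
    show k * m % (2 * n + 1) = 1 % (2 * n + 1)
    rw [hm, Nat.mod_eq_of_lt hN1]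
  have hcn : Nat.Coprime n (2 * n + 1) := by
    have h1 := (Nat.coprime_mul_left_add_right n 1 2).mpr (Nat.coprime_one_right n)
    rwa [show n * 2 + 1 = 2 * n + 1 by ring] at h1
  obtain ⟨m', -, hm'⟩ := Nat.exists_mul_mod_eq_one_of_coprime hcn hN1
  have hnm : n * m' ≡ 1 [MOD 2 * n + 1] := by
    show n * m' % (2 * n + 1) = 1 % (2 * n + 1)
    rw [hm', Nat.mod_eq_of_lt hN1]
  refine ⟨?_, ?_, ?_, ?_⟩
  · have := sine_ratio_integral n k 1 k (by rw [one_mul]) (by simpa using hsin 1 le_rfl hn)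
    simpa using this
  · have := sine_ratio_integral n 1 k m hkm (hsin k hk1 hkn)
    simpa using this
  · have hvc : n * (m' * k) ≡ k [MOD 2 * n + 1] := by
      have := hnm.mul_right k
      rwa [mul_assoc, one_mul] at this
    exact sine_ratio_integral n k n (m' * k) hvc (hsin n hn le_rfl)
  · have hvc : k * (m * n) ≡ n [MOD 2 * n + 1] := by
      have := hkm.mul_right n
      rwa [mul_assoc, one_mul] at this
    exact sine_ratio_integral n n k (m * n) hvc (hsin k hk1 hkn)
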